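/- Let 0<q<1 and let m be a positive integer. Define A(m,0) := q^m/[m]_q and, for n ≥ 1, A(m,n) := Σ_{k_1>k_2>...>k_n>0} (q^{m+k_1}/[m+k_1]_q) ∏_{j=1}^n 1/[k_j]_q, summed over n-tuples of positive integers k_1 > ... > k_n > 0. Then for every complex x with |x| < 1, the series A_m(x) := Σ_{n=0}^∞ x^n A(m,n) converges and equals (q^m/[m]_q) ∏_{c=1}^m (1 − x q^c/[c]_q)^{-1}. -/

import Mathlib

/-- The `q`-analog of a natural number: `[k]_q = (1-q^k)/(1-q)`. -/
noncomputable def qnum (q : ℝ) (k : ℕ) : ℝ := (1 - q ^ k) / (1 - q)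

/-- `A(m,n)`: for `n = 0` it is `q^m/[m]`; for `n ≥ 1` it is the sum over
strictly decreasing tuples `k₁ > ⋯ > kₙ > 0` of `(q^{m+k₁}/[m+k₁]) ∏ⱼ 1/[kⱼ]`. -/
noncomputable def Aq (q : ℝ) (m n : ℕ) : ℝ :=
  if hn : n = 0 then q ^ m / qnum q m
  else
    ∑' k : {k : Fin n → ℕ // (∀ i j : Fin n, i < j → k j < k i) ∧ ∀ j, 0 < k j},
      (q ^ (m + k.1 ⟨0, Nat.pos_of_ne_zero hn⟩) / qnum q (m + k.1 ⟨0, Nat.pos_of_ne_zero hn⟩)) *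
        ∏ j : Fin n, 1 / qnum q (k.1 j)

namespace QAux

noncomputable def aq (q : ℝ) (k : ℕ) : ℝ := q ^ k / qnum q k

noncomputable def Fq (q : ℝ) : ℕ → ℕ → ℝ
  | m, 0 => aq q m
  | m, n+1 => aq q m * ∑ r ∈ Finset.Icc 1 m, Fq q r n

variable {q : ℝ}

lemma qnum_pos (hq0 : 0 < q) (hq1 : q < 1) {k : ℕ} (hk : 1 ≤ k) : 0 < qnum q k := by
  have h1 : q ^ k < 1 := pow_lt_one₀ hq0.le hq1 (by omega)
  have : 0 < 1 - q := by linarith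
  exact div_pos (by linarith) this

lemma one_le_qnum (hq0 : 0 < q) (hq1 : q < 1) {k : ℕ} (hk : 1 ≤ k) : 1 ≤ qnum q k := by
  have hqk : q ^ k ≤ q := by
    calc q ^ k ≤ q ^ 1 := pow_le_pow_of_le_one hq0.le hq1.le hk
    _ = q := pow_one q
  rw [qnum, le_div_iff₀ (by linarith)]
  linarith

lemma qnum_ne (hq0 : 0 < q) (hq1 : q < 1) {k : ℕ} (hk : 1 ≤ k) : qnum q k ≠ 0 := (qnum_pos hq0 hq1 hk).ne'

lemma aq_pos (hq0 : 0 < q) (hq1 : q < 1) {k : ℕ} (hk : 1 ≤ k) : 0 < aq q k :=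
  div_pos (pow_pos hq0 k) (qnum_pos hq0 hq1 hk)

lemma aq_nonneg (hq0 : 0 < q) (hq1 : q < 1) (k : ℕ) : 0 ≤ aq q k := by
  rcases Nat.eq_zero_or_pos k with rfl | hk
  · simp [aq, qnum]
  · exact (aq_pos hq0 hq1 hk).le

lemma aq_le_pow (hq0 : 0 < q) (hq1 : q < 1) {k : ℕ} (hk : 1 ≤ k) : aq q k ≤ q ^ k :=
  div_le_self (pow_pos hq0 k).le (one_le_qnum hq0 hq1 hk)

lemma aq_le_q (hq0 : 0 < q) (hq1 : q < 1) {k : ℕ} (hk : 1 ≤ k) : aq q k ≤ q := by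
  calc aq q k ≤ q ^ k := aq_le_pow hq0 hq1 hk
  _ ≤ q ^ 1 := pow_le_pow_of_le_one hq0.le hq1.le hk
  _ = q := pow_one q

lemma key_id (hq0 : 0 < q) (hq1 : q < 1) {m j : ℕ} (hm : 1 ≤ m) (hj : 1 ≤ j) :
    aq q (m + j) / qnum q j = aq q m * (aq q j - aq q (m + j)) := by
  have h1 : (1:ℝ) - q ≠ 0 := by linarith
  have h2 : (1:ℝ) - q ^ m ≠ 0 := by
    have := pow_lt_one₀ hq0.le hq1 (by omega : m ≠ 0); linarith
  have h3 : (1:ℝ) - q ^ j ≠ 0 := by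
    have := pow_lt_one₀ hq0.le hq1 (by omega : j ≠ 0); linarith
  have h4 : (1:ℝ) - q ^ (m + j) ≠ 0 := by
    have := pow_lt_one₀ hq0.le hq1 (by omega : m + j ≠ 0); linarith
  simp only [aq, qnum]
  field_simp
  simp only [pow_add]
  ring
def Dt (n : ℕ) := {k : Fin n → ℕ // (∀ i j : Fin n, i < j → k j < k i) ∧ ∀ j, 0 < k j}

noncomputable def W (q : ℝ) (m n : ℕ) (k : Dt n) : ℝ :=
  aq q (m + Finset.univ.sup k.1) * ∏ j, 1 / qnum q (k.1 j)

instance : Unique (Dt 0) where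
  default := ⟨Fin.elim0, ⟨fun i => i.elim0, fun j => j.elim0⟩⟩
  uniq a := Subtype.ext (funext fun j => j.elim0)

lemma sup_cons {n : ℕ} (v : ℕ) (k' : Fin n → ℕ) (h : ∀ j, k' j ≤ v) :
    Finset.univ.sup (Fin.cons v k' : Fin (n+1) → ℕ) = v := by
  refine le_antisymm (Finset.sup_le ?_) ?_
  · intro j _
    rcases Fin.eq_zero_or_eq_succ j with rfl | ⟨j', rfl⟩
    · simp
    · simpa using h j'
  · simpa using Finset.le_sup (f := Fin.cons v k') (Finset.mem_univ (0 : Fin (n+1)))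

def dequiv (n : ℕ) : Dt n × ℕ ≃ Dt (n+1) where
  toFun p := ⟨Fin.cons (Finset.univ.sup p.1.1 + 1 + p.2) p.1.1, by
    constructor
    · intro i j hij
      rcases Fin.eq_zero_or_eq_succ j with rfl | ⟨j', rfl⟩
      · exact absurd hij (by simp)
      rcases Fin.eq_zero_or_eq_succ i with rfl | ⟨i', rfl⟩
      · simp only [Fin.cons_zero, Fin.cons_succ]
        have := Finset.le_sup (f := p.1.1) (Finset.mem_univ j')
        omega
      · simp only [Fin.cons_succ]
        exact p.1.2.1 i' j' (Fin.succ_lt_succ_iff.mp hij)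
    · intro j
      rcases Fin.eq_zero_or_eq_succ j with rfl | ⟨j', rfl⟩
      · simp only [Fin.cons_zero]; omega
      · simp only [Fin.cons_succ]; exact p.1.2.2 j'⟩
  invFun k := (⟨Fin.tail k.1,
      fun i j hij => k.2.1 i.succ j.succ (Fin.succ_lt_succ_iff.mpr hij),
      fun j => k.2.2 j.succ⟩,
    k.1 0 - Finset.univ.sup (Fin.tail k.1) - 1)
  left_inv := by
    rintro ⟨⟨k', hk'⟩, t⟩
    have h1 : Fin.tail (Fin.cons (α := fun _ => ℕ) (Finset.univ.sup k' + 1 + t) k') = k' := Fin.tail_cons _ _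
    refine Prod.ext (Subtype.ext h1) ?_
    dsimp only
    rw [h1, Fin.cons_zero]
    omega
  right_inv := by
    rintro ⟨k, hdec, hpos⟩
    dsimp only
    have hlt : Finset.univ.sup (Fin.tail k) < k 0 := by
      refine Finset.sup_lt_iff (by simpa using hpos 0) |>.mpr ?_
      intro j _
      exact hdec 0 j.succ (Fin.succ_pos j)
    have e0 : Finset.univ.sup (Fin.tail k) + 1 + (k 0 - Finset.univ.sup (Fin.tail k) - 1) = k 0 := by
      omega
    refine Subtype.ext ?_
    show Fin.cons (Finset.univ.sup (Fin.tail k) + 1 + (k 0 - Finset.univ.sup (Fin.tail k) - 1))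
        (Fin.tail k) = k
    rw [e0]
    exact Fin.cons_self_tail k

lemma dequiv_apply (n : ℕ) (k' : Dt n) (t : ℕ) :
    ((dequiv n) (k', t)).1 = Fin.cons (Finset.univ.sup k'.1 + 1 + t) k'.1 := rfl

variable {q : ℝ}

lemma W_nonneg (hq0 : 0 < q) (hq1 : q < 1) (m n : ℕ) (k : Dt n) : 0 ≤ W q m n k := by
  refine mul_nonneg (aq_nonneg hq0 hq1 _) (Finset.prod_nonneg fun j _ => ?_)
  have := qnum_pos hq0 hq1 (k.2.2 j)
  positivity

lemma inner_hasSum (hq0 : 0 < q) (hq1 : q < 1) (m S : ℕ) (hm : 1 ≤ m) :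
    HasSum (fun t : ℕ => aq q (m + (S + 1 + t)) / qnum q (S + 1 + t))
      (aq q m * ∑ r ∈ Finset.Icc 1 m, aq q (r + S)) := by
  set v : ℕ → ℝ := fun t => aq q (S + 1 + t) with hv
  have hvs : Summable v := by
    refine Summable.of_nonneg_of_le (fun t => aq_nonneg hq0 hq1 _) (fun t => ?_)
      (summable_geometric_of_lt_one hq0.le hq1)
    calc aq q (S+1+t) ≤ q ^ (S+1+t) := aq_le_pow hq0 hq1 (by omega)
      _ ≤ q ^ t := pow_le_pow_of_le_one hq0.le hq1.le (by omega)
  have h2 : HasSum (fun t => v (t + m)) ((∑' t, v t) - ∑ i ∈ Finset.range m, v i) :=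
    (hasSum_nat_add_iff' m).mpr hvs.hasSum
  have h3 := (hvs.hasSum.sub h2).mul_left (aq q m)
  have hfun : (fun t => aq q m * (v t - v (t + m)))
      = fun t => aq q (m + (S + 1 + t)) / qnum q (S + 1 + t) := by
    funext t
    have e : S + 1 + (t + m) = m + (S + 1 + t) := by omega
    rw [hv]
    dsimp only
    rw [e, key_id hq0 hq1 hm (by omega : 1 ≤ S + 1 + t)]
  have hval : aq q m * ((∑' t, v t) - ((∑' t, v t) - ∑ i ∈ Finset.range m, v i))
      = aq q m * ∑ r ∈ Finset.Icc 1 m, aq q (r + S) := by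
    have e1 : ∑ r ∈ Finset.Icc 1 m, aq q (r + S) = ∑ i ∈ Finset.range m, v i := by
      rw [← Finset.Ico_add_one_right_eq_Icc, Finset.sum_Ico_eq_sum_range]
      refine Finset.sum_congr (by rw [Nat.add_sub_cancel]) fun i _ => ?_
      rw [hv]
      dsimp only
      rw [show S + 1 + i = 1 + i + S by omega]
    rw [e1]
    ring
  rw [hfun, hval] at h3
  exact h3

lemma main (hq0 : 0 < q) (hq1 : q < 1) :
    ∀ n m : ℕ, 1 ≤ m → Summable (W q m n) ∧ ∑' k, W q m n k = Fq q m n := by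
  intro n
  induction n with
  | zero =>
    intro m hm
    constructor
    · exact Summable.of_finite
    · rw [tsum_eq_single default (fun b hb => absurd (Subsingleton.elim b default) hb)]
      simp only [W]
      rw [show Finset.univ.sup (default : Dt 0).1 = 0 by simp [Finset.univ_eq_empty]]
      simp [Fq]
  | succ n ih =>
    intro m hm
    have hWeq : ∀ (k' : Dt n) (t : ℕ), W q m (n+1) (dequiv n (k', t))
        = (aq q (m + (Finset.univ.sup k'.1 + 1 + t)) / qnum q (Finset.univ.sup k'.1 + 1 + t)) *
            ∏ j, 1 / qnum q (k'.1 j) := by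
      intro k' t
      simp only [W]
      rw [dequiv_apply, Fin.prod_univ_succ]
      simp only [Fin.cons_zero, Fin.cons_succ]
      rw [sup_cons _ _ (fun j => by
        have := Finset.le_sup (f := k'.1) (Finset.mem_univ j); omega)]
      ring
    set g : Dt n × ℕ → ℝ := fun p => W q m (n+1) (dequiv n p) with hg
    have hinner : ∀ k' : Dt n, HasSum (fun t => g (k', t))
        ((aq q m * ∑ r ∈ Finset.Icc 1 m, aq q (r + Finset.univ.sup k'.1)) *
          ∏ j, 1 / qnum q (k'.1 j)) := by
      intro k'
      have h := (inner_hasSum hq0 hq1 m (Finset.univ.sup k'.1) hm).mul_right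
        (∏ j, 1 / qnum q (k'.1 j))
      rw [show (fun t => (aq q (m + (Finset.univ.sup k'.1 + 1 + t)) /
            qnum q (Finset.univ.sup k'.1 + 1 + t)) * ∏ j, 1 / qnum q (k'.1 j))
          = fun t => g (k', t) from funext fun t => (hWeq k' t).symm] at h
      exact h
    have h_t1 : ∀ k' : Dt n, ∑' t, g (k', t) = aq q m * ∑ r ∈ Finset.Icc 1 m, W q r n k' := by
      intro k'
      rw [(hinner k').tsum_eq, mul_assoc, Finset.sum_mul]
      simp only [W]
    have hgnn : 0 ≤ g := fun p => W_nonneg hq0 hq1 _ _ _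
    have hsum2 : Summable fun k' : Dt n => ∑' t, g (k', t) :=
      (((summable_sum fun r hr => (ih r (Finset.mem_Icc.mp hr).1).1)).mul_left
        (aq q m)).congr fun k' => (h_t1 k').symm
    have hgsum : Summable g :=
      (summable_prod_of_nonneg hgnn).mpr ⟨fun k' => (hinner k').summable, hsum2⟩
    have hWsum : Summable (W q m (n+1)) :=
      ((dequiv n).summable_iff (f := W q m (n+1))).mp hgsum
    refine ⟨hWsum, ?_⟩
    have e1 : ∑' k, W q m (n+1) k = ∑' p, g p := ((dequiv n).tsum_eq (W q m (n+1))).symm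
    rw [e1, Summable.tsum_prod' hgsum (fun k' => (hinner k').summable), tsum_congr h_t1,
      tsum_mul_left, Summable.tsum_finsetSum (fun r hr => (ih r (Finset.mem_Icc.mp hr).1).1)]
    show aq q m * ∑ r ∈ Finset.Icc 1 m, ∑' k', W q r n k' = Fq q m (n+1)
    rw [Fq]
    congr 1
    exact Finset.sum_congr rfl fun r hr => (ih r (Finset.mem_Icc.mp hr).1).2

lemma Aq_eq_Fq (hq0 : 0 < q) (hq1 : q < 1) (m n : ℕ) (hm : 1 ≤ m) : Aq q m n = Fq q m n := by
  cases n with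
  | zero => rw [Aq, dif_pos rfl]; rfl
  | succ n =>
    rw [Aq, dif_neg (Nat.succ_ne_zero n)]
    rw [← (main hq0 hq1 (n+1) m hm).2]
    apply tsum_congr
    intro k
    have hsup : Finset.univ.sup k.1 = k.1 0 := by
      refine le_antisymm (Finset.sup_le fun j _ => ?_) (Finset.le_sup (Finset.mem_univ _))
      rcases eq_or_ne j 0 with rfl | hj
      · exact le_rfl
      · exact (k.2.1 0 j (Fin.pos_of_ne_zero hj)).le
    simp only [W, aq, Fin.mk_zero, hsup]

lemma realgeom {y : ℝ} (hy : 1 ≤ y) : ∀ t, ∑ i ∈ Finset.range (t+1), y ^ i ≤ (y+1)^t := by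
  intro t
  induction t with
  | zero => simp
  | succ t ih =>
    rw [Finset.sum_range_succ]
    have h1 : y ^ (t+1) ≤ y * (y+1)^t := by
      rw [pow_succ, mul_comm]
      exact mul_le_mul_of_nonneg_left (pow_le_pow_left₀ (by linarith) (by linarith) t)
        (by linarith)
    calc ∑ i ∈ Finset.range (t+1), y ^ i + y ^ (t+1) ≤ (y+1)^t + y * (y+1)^t :=
          add_le_add ih h1
      _ = (y+1)^(t+1) := by ring

lemma Fq_nonneg (hq0 : 0 < q) (hq1 : q < 1) : ∀ n m : ℕ, 0 ≤ Fq q m n := by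
  intro n
  induction n with
  | zero => intro m; exact aq_nonneg hq0 hq1 m
  | succ n ih =>
    intro m
    exact mul_nonneg (aq_nonneg hq0 hq1 m) (Finset.sum_nonneg fun r _ => ih r)

lemma Fq_le (hq0 : 0 < q) (hq1 : q < 1) :
    ∀ n m' : ℕ, Fq q (m'+1) n ≤ q^(n+1) * ((n:ℝ)+1)^m' := by
  intro n
  induction n with
  | zero =>
    intro m'
    simpa [Fq] using aq_le_q hq0 hq1 (Nat.succ_le_succ (Nat.zero_le m'))
  | succ n ih =>
    intro m'
    have e1 : ∑ r ∈ Finset.Icc 1 (m'+1), Fq q r n = ∑ i ∈ Finset.range (m'+1), Fq q (1+i) n := by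
      rw [← Finset.Ico_add_one_right_eq_Icc, Finset.sum_Ico_eq_sum_range]
      exact Finset.sum_congr (by rw [Nat.add_sub_cancel]) fun i _ => rfl
    have e2 : ∑ i ∈ Finset.range (m'+1), Fq q (1+i) n
        ≤ q^(n+1) * (((n:ℝ)+1)+1)^m' := by
      calc ∑ i ∈ Finset.range (m'+1), Fq q (1+i) n
          ≤ ∑ i ∈ Finset.range (m'+1), q^(n+1) * ((n:ℝ)+1)^i := by
            refine Finset.sum_le_sum fun i _ => ?_
            rw [show 1 + i = i + 1 by omega]
            exact ih i
        _ = q^(n+1) * ∑ i ∈ Finset.range (m'+1), ((n:ℝ)+1)^i := by rw [Finset.mul_sum]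
        _ ≤ q^(n+1) * (((n:ℝ)+1)+1)^m' := by
            refine mul_le_mul_of_nonneg_left (realgeom (by have := Nat.cast_nonneg (α := ℝ) n; linarith) m') (by positivity)
    have h3 : Fq q (m'+1) (n+1) = aq q (m'+1) * ∑ r ∈ Finset.Icc 1 (m'+1), Fq q r n := rfl
    rw [h3, e1]
    have haq : aq q (m'+1) ≤ q := aq_le_q hq0 hq1 (by omega)
    have hsnn : 0 ≤ ∑ i ∈ Finset.range (m'+1), Fq q (1+i) n :=
      Finset.sum_nonneg fun i _ => Fq_nonneg hq0 hq1 n _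
    calc aq q (m'+1) * ∑ i ∈ Finset.range (m'+1), Fq q (1+i) n
        ≤ q * (q^(n+1) * (((n:ℝ)+1)+1)^m') := by
          refine mul_le_mul haq e2 hsnn hq0.le
      _ = q^(n+1+1) * (((n+1:ℕ):ℝ)+1)^m' := by push_cast; ring

section Complexpart

variable {x : ℂ}

lemma summable_xF (hq0 : 0 < q) (hq1 : q < 1) (hx : ‖x‖ < 1) (m : ℕ) (hm : 1 ≤ m) :
    Summable (fun n : ℕ => x ^ n * (Fq q m n : ℂ)) := by
  obtain ⟨m', rfl⟩ : ∃ m', m = m' + 1 := ⟨m - 1, by omega⟩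
  set r : ℝ := ‖x‖ * q with hr
  have hr0 : 0 ≤ r := mul_nonneg (norm_nonneg x) hq0.le
  have hr1 : ‖r‖ < 1 := by
    rw [Real.norm_eq_abs, abs_of_nonneg hr0, hr]
    nlinarith [norm_nonneg x]
  have S1 : Summable (fun n : ℕ => ((n : ℝ) + 1) ^ m' * r ^ n) := by
    have he : ∀ n : ℕ, ((n : ℝ) + 1) ^ m' * r ^ n
        = ∑ i ∈ Finset.range (m' + 1), (m'.choose i : ℝ) * ((n : ℝ) ^ i * r ^ n) := by
      intro n
      rw [add_pow, Finset.sum_mul]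
      refine Finset.sum_congr rfl fun i _ => by ring
    rw [funext he]
    exact summable_sum fun i _ =>
      (summable_pow_mul_geometric_of_norm_lt_one i hr1).mul_left _
  refine Summable.of_norm_bounded (S1.mul_left q)
    fun n => ?_
  rw [norm_mul, norm_pow, Complex.norm_real, Real.norm_eq_abs,
    abs_of_nonneg (Fq_nonneg hq0 hq1 n (m' + 1))]
  calc ‖x‖ ^ n * Fq q (m' + 1) n
      ≤ ‖x‖ ^ n * (q ^ (n + 1) * ((n : ℝ) + 1) ^ m') := by
        refine mul_le_mul_of_nonneg_left (Fq_le hq0 hq1 n m') (by positivity)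
    _ = q * (((n : ℝ) + 1) ^ m' * r ^ n) := by rw [hr, mul_pow]; ring

lemma Grec (hq0 : 0 < q) (hq1 : q < 1) (hx : ‖x‖ < 1) (m' : ℕ) :
    (∑' n : ℕ, x ^ n * (Fq q (m' + 1) n : ℂ))
      = (aq q (m' + 1) : ℂ) + x * (aq q (m' + 1) : ℂ) *
          ∑ r ∈ Finset.Icc 1 (m' + 1), ∑' n : ℕ, x ^ n * (Fq q r n : ℂ) := by
  rw [Summable.tsum_eq_zero_add (summable_xF hq0 hq1 hx (m' + 1) (by omega))]
  have h0 : x ^ 0 * (Fq q (m' + 1) 0 : ℂ) = (aq q (m' + 1) : ℂ) := by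
    rw [pow_zero, one_mul]; rfl
  have h1 : ∀ n : ℕ, x ^ (n + 1) * (Fq q (m' + 1) (n + 1) : ℂ)
      = ∑ r ∈ Finset.Icc 1 (m' + 1), (x * (aq q (m' + 1) : ℂ)) * (x ^ n * (Fq q r n : ℂ)) := by
    intro n
    rw [show (Fq q (m' + 1) (n + 1) : ℝ) = aq q (m' + 1) * ∑ r ∈ Finset.Icc 1 (m' + 1), Fq q r n
      from rfl]
    push_cast
    rw [Finset.mul_sum, Finset.mul_sum]
    refine Finset.sum_congr rfl fun r _ => by ring
  rw [h0, tsum_congr h1,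
    Summable.tsum_finsetSum (fun r hr => ((summable_xF hq0 hq1 hx r (Finset.mem_Icc.mp hr).1).mul_left _))]
  congr 1
  rw [Finset.mul_sum]
  exact Finset.sum_congr rfl fun r _ => tsum_mul_left

lemma one_sub_ne (hq0 : 0 < q) (hq1 : q < 1) (hx : ‖x‖ < 1) {c : ℕ} (hc : 1 ≤ c) :
    (1 : ℂ) - x * (aq q c : ℂ) ≠ 0 := by
  intro h
  have h1 : ‖x * (aq q c : ℂ)‖ < 1 := by
    rw [norm_mul, Complex.norm_real, Real.norm_eq_abs, abs_of_nonneg (aq_nonneg hq0 hq1 c)]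
    have h2 := aq_le_q hq0 hq1 hc
    have h3 := aq_nonneg hq0 hq1 c
    nlinarith [norm_nonneg x]
  rw [sub_eq_zero] at h
  rw [← h] at h1
  simp at h1

lemma Gprod (hq0 : 0 < q) (hq1 : q < 1) (hx : ‖x‖ < 1) : ∀ m : ℕ,
    (1 + x * ∑ r ∈ Finset.Icc 1 m, ∑' n : ℕ, x ^ n * (Fq q r n : ℂ)
      = ∏ c ∈ Finset.Icc 1 m, (1 - x * (aq q c : ℂ))⁻¹)
    ∧ ∀ k, 1 ≤ k → k ≤ m →
      (∑' n : ℕ, x ^ n * (Fq q k n : ℂ))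
        = (aq q k : ℂ) * ∏ c ∈ Finset.Icc 1 k, (1 - x * (aq q c : ℂ))⁻¹ := by
  intro m
  induction m with
  | zero =>
    refine ⟨by simp, fun k h1 h2 => absurd (h1.trans h2) (by omega)⟩
  | succ m ih =>
    have hne := one_sub_ne hq0 hq1 hx (c := m + 1) (by omega)
    have hG := Grec hq0 hq1 hx m
    rw [Finset.sum_Icc_succ_top (by omega : 1 ≤ m + 1)] at hG
    have key : (1 - x * (aq q (m + 1) : ℂ)) * (∑' n : ℕ, x ^ n * (Fq q (m + 1) n : ℂ))
        = (aq q (m + 1) : ℂ) * ∏ c ∈ Finset.Icc 1 m, (1 - x * (aq q c : ℂ))⁻¹ := by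
      linear_combination hG + (aq q (m + 1) : ℂ) * ih.1
    have Gval : (∑' n : ℕ, x ^ n * (Fq q (m + 1) n : ℂ))
        = (aq q (m + 1) : ℂ) * ∏ c ∈ Finset.Icc 1 (m + 1), (1 - x * (aq q c : ℂ))⁻¹ := by
      rw [Finset.prod_Icc_succ_top (by omega : 1 ≤ m + 1)]
      calc (∑' n : ℕ, x ^ n * (Fq q (m + 1) n : ℂ))
          = (1 - x * (aq q (m + 1) : ℂ))⁻¹ *
              ((1 - x * (aq q (m + 1) : ℂ)) * ∑' n : ℕ, x ^ n * (Fq q (m + 1) n : ℂ)) := by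
            rw [← mul_assoc, inv_mul_cancel₀ hne, one_mul]
        _ = (1 - x * (aq q (m + 1) : ℂ))⁻¹ *
              ((aq q (m + 1) : ℂ) * ∏ c ∈ Finset.Icc 1 m, (1 - x * (aq q c : ℂ))⁻¹) := by
            rw [key]
        _ = (aq q (m + 1) : ℂ) * ((∏ c ∈ Finset.Icc 1 m, (1 - x * (aq q c : ℂ))⁻¹) *
              (1 - x * (aq q (m + 1) : ℂ))⁻¹) := by ring
    refine ⟨?_, fun k hk1 hk2 => ?_⟩
    · rw [Finset.sum_Icc_succ_top (by omega : 1 ≤ m + 1),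
        Finset.prod_Icc_succ_top (by omega : 1 ≤ m + 1)]
      have h2 : (1 + x * (∑ r ∈ Finset.Icc 1 m, ∑' n : ℕ, x ^ n * (Fq q r n : ℂ)
            + ∑' n : ℕ, x ^ n * (Fq q (m + 1) n : ℂ))) * (1 - x * (aq q (m + 1) : ℂ))
          = ∏ c ∈ Finset.Icc 1 m, (1 - x * (aq q c : ℂ))⁻¹ := by
        linear_combination (1 - x * (aq q (m + 1) : ℂ)) * ih.1 + x * key
      rw [← h2, mul_assoc, mul_inv_cancel₀ hne, mul_one]
    · rcases Nat.lt_or_ge k (m + 1) with h | h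
      · exact ih.2 k hk1 (by omega)
      · have : k = m + 1 := by omega
        subst this
        exact Gval

end Complexpart

end QAux

/-- The generating function `A_m(x) = Σ_n x^n A(m,n)` converges for `|x| < 1`
and has the stated product representation. -/
theorem q_A_generating_function (q : ℝ) (hq0 : 0 < q) (hq1 : q < 1)
    (m : ℕ) (hm : 1 ≤ m) (x : ℂ) (hx : ‖x‖ < 1) :
    Summable (fun n : ℕ => x ^ n * (Aq q m n : ℂ)) ∧
    (∑' n : ℕ, x ^ n * (Aq q m n : ℂ))
      = ((q : ℂ) ^ m / (qnum q m : ℂ)) *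
          ∏ c ∈ Finset.Icc 1 m, (1 - x * (q : ℂ) ^ c / (qnum q c : ℂ))⁻¹ := by
  have hAeq : ∀ n : ℕ, x ^ n * (Aq q m n : ℂ) = x ^ n * (QAux.Fq q m n : ℂ) := by
    intro n
    rw [QAux.Aq_eq_Fq hq0 hq1 m n hm]
  have hcast : ((QAux.aq q m : ℝ) : ℂ) = (q : ℂ) ^ m / (qnum q m : ℂ) := by
    rw [QAux.aq]; push_cast; ring
  have hprod : (∏ c ∈ Finset.Icc 1 m, (1 - x * (QAux.aq q c : ℂ))⁻¹)
      = ∏ c ∈ Finset.Icc 1 m, (1 - x * (q : ℂ) ^ c / (qnum q c : ℂ))⁻¹ := by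
    refine Finset.prod_congr rfl fun c _ => ?_
    rw [QAux.aq]
    push_cast
    rw [mul_div_assoc]
  constructor
  · exact (QAux.summable_xF hq0 hq1 hx m hm).congr fun n => (hAeq n).symm
  · rw [tsum_congr hAeq, (QAux.Gprod hq0 hq1 hx m).2 m hm le_rfl, hcast, hprod]
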